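/- Let s ≥ 1 be a real number. For every holomorphic function F on Π⁺ with ∫_{Π⁺} |F(x+iy)|² dx dy < ∞, one has ∫_{Π⁺} |F(x+iy)|^{2s} y^{2s−2} dx dy ≤ (π^{1−s} / 2^{2s−2}) · (∫_{Π⁺} |F(x+iy)|² dx dy)^s. -/

import Mathlib

open MeasureTheory Real Set
open Metric
open scoped ENNReal NNReal

lemma circle_mean (g : ℂ → ℂ) {R r : ℝ} (hg : DifferentiableOn ℂ g (ball (0:ℂ) R))
    (hr : 0 < r) (hrR : r < R) :
    2 * π * ‖g 0‖ ≤ ∫ θ in (0:ℝ)..2*π, ‖g (circleMap 0 r θ)‖ := by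
  have hsub : closedBall (0:ℂ) r ⊆ ball (0:ℂ) R := closedBall_subset_ball hrR
  have hmem : (0:ℂ) ∈ ball (0:ℂ) r := mem_ball_self hr
  have hcauchy := (hg.mono hsub).circleIntegral_sub_inv_smul hmem
  have hnorm : ‖∮ z in C(0, r), (z - 0)⁻¹ • g z‖ = 2 * π * ‖g 0‖ := by
    rw [hcauchy]
    simp [norm_smul, abs_of_pos Real.pi_pos, mul_assoc]
  rw [← hnorm]
  unfold circleIntegral
  refine le_trans (intervalIntegral.norm_integral_le_integral_norm (by positivity)) ?_
  refine le_of_eq (intervalIntegral.integral_congr fun θ _ => ?_)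
  have h1 : circleMap 0 r θ ≠ 0 := circleMap_ne_center hr.ne'
  rw [norm_smul, norm_smul]
  simp [deriv_circleMap, norm_inv, norm_circleMap_zero, abs_of_pos hr]
  field_simp

lemma circle_mean_sq (f : ℂ → ℂ) (hf : DifferentiableOn ℂ f (ball (0:ℂ) 1))
    {r : ℝ} (hr : 0 < r) (hr1 : r < 1) :
    2 * π * ‖f 0‖^2 ≤ ∫ θ in (0:ℝ)..2*π, ‖f (circleMap 0 r θ)‖^2 := by
  have h := circle_mean (fun z => f z * f z) (hf.mul hf) hr hr1
  simpa [norm_mul, ← sq] using h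

lemma circleMap_eq (r θ : ℝ) :
    Complex.measurableEquivRealProd.symm (_root_.polarCoord.symm (r, θ)) = circleMap 0 r θ := by
  apply Complex.ext <;>
  · simp only [Complex.measurableEquivRealProd_symm_apply, circleMap, zero_add,
      mul_comm Complex.I, Complex.exp_ofReal_mul_I_re, Complex.exp_ofReal_mul_I_im,
      Complex.mul_re, Complex.mul_im, Complex.ofReal_re, Complex.ofReal_im]
    simp [_root_.polarCoord]

lemma area_bound (f : ℂ → ℂ) (hf : DifferentiableOn ℂ f (ball (0:ℂ) 1)) :
    ENNReal.ofReal (π * ‖f 0‖^2) ≤ ∫⁻ z in ball (0:ℂ) 1, ENNReal.ofReal (‖f z‖^2) := by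
  set E := Complex.measurableEquivRealProd with hEdef
  have hE : ∫⁻ p in E.symm ⁻¹' (ball (0:ℂ) 1), ENNReal.ofReal (‖f (E.symm p)‖^2)
      = ∫⁻ z in ball (0:ℂ) 1, ENNReal.ofReal (‖f z‖^2) :=
    (Complex.volume_preserving_equiv_real_prod.symm Complex.measurableEquivRealProd).setLIntegral_comp_preimage_emb
      E.symm.measurableEmbedding (fun z => ENNReal.ofReal (‖f z‖^2)) (ball (0:ℂ) 1)
  set s : Set (ℝ×ℝ) := Ioo (0:ℝ) 1 ×ˢ Ioo (-π) π with hsdef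
  set B : ℝ × ℝ → ℝ × ℝ →L[ℝ] ℝ × ℝ := fun p =>
    LinearMap.toContinuousLinearMap (Matrix.toLin (Module.Basis.finTwoProd ℝ) (Module.Basis.finTwoProd ℝ)
      !![cos p.2, -p.1 * sin p.2; sin p.2, p.1 * cos p.2]) with hBdef
  have B_det : ∀ p, (B p).det = p.1 := by
    intro p
    conv_rhs => rw [← one_mul p.1, ← cos_sq_add_sin_sq p.2]
    simp only [hBdef, neg_mul, LinearMap.det_toContinuousLinearMap, LinearMap.det_toLin,
      Matrix.det_fin_two_of, sub_neg_eq_add]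
    ring
  have hs : MeasurableSet s := measurableSet_Ioo.prod measurableSet_Ioo
  have hsub : s ⊆ _root_.polarCoord.target := by
    rw [polarCoord_target]
    exact Set.prod_mono Ioo_subset_Ioi_self subset_rfl
  have hinj : InjOn (_root_.polarCoord.symm) s := by
    refine InjOn.mono hsub ?_
    have := _root_.polarCoord.symm.injOn
    rwa [OpenPartialHomeomorph.symm_source] at this
  have hder : ∀ p ∈ s, HasFDerivWithinAt _root_.polarCoord.symm (B p) s p :=
    fun p _ => (hasFDerivAt_polarCoord_symm p).hasFDerivWithinAt
  set g : ℝ × ℝ → ℝ≥0∞ :=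
    fun p => ENNReal.ofReal |p.1| * ENNReal.ofReal (‖f (circleMap 0 p.1 p.2)‖^2) with hgdef
  set g0 : ℝ × ℝ → ℝ≥0∞ := fun q => ENNReal.ofReal (‖f (E.symm q)‖^2) with hg0def
  -- continuity of the circle map family
  have hcm : Continuous (fun p : ℝ × ℝ => circleMap 0 p.1 p.2) := by
    unfold circleMap
    fun_prop
  have hmaps : MapsTo (fun p : ℝ × ℝ => circleMap 0 p.1 p.2) s (ball (0:ℂ) 1) := by
    intro p hp
    simp only [mem_ball, dist_zero_right, norm_circleMap_zero]
    rw [abs_of_pos hp.1.1]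
    exact hp.1.2
  have h2 : ContinuousOn (fun p : ℝ × ℝ => ‖f (circleMap 0 p.1 p.2)‖^2) s :=
    ((hf.continuousOn.comp hcm.continuousOn hmaps).norm).pow 2
  have hgmeas : AEMeasurable g (volume.restrict s) :=
    (measurable_fst.abs.ennreal_ofReal).aemeasurable.mul
      (ENNReal.measurable_ofReal.comp_aemeasurable (h2.aemeasurable hs))
  have Fub : ∫⁻ p in s, g p = ∫⁻ r in Ioo (0:ℝ) 1, ∫⁻ θ in Ioo (-π) π, g (r, θ) := by
    rw [hsdef] at hgmeas ⊢
    rw [Measure.volume_eq_prod, ← Measure.prod_restrict] at hgmeas ⊢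
    exact lintegral_prod _ hgmeas
  -- inner bound
  have inner : ∀ r ∈ Ioo (0:ℝ) 1,
      ENNReal.ofReal r * ENNReal.ofReal (2*π*‖f 0‖^2) ≤ ∫⁻ θ in Ioo (-π) π, g (r, θ) := by
    intro r hr
    have hfc : Continuous (fun θ : ℝ => ‖f (circleMap 0 r θ)‖^2) := by
      have h1 : Continuous (fun θ : ℝ => circleMap 0 r θ) := continuous_circleMap 0 r
      have h2 : ∀ θ : ℝ, circleMap 0 r θ ∈ ball (0:ℂ) 1 := by
        intro θ
        simp only [mem_ball, dist_zero_right, norm_circleMap_zero]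
        rw [abs_of_pos hr.1]; exact hr.2
      exact ((hf.continuousOn.comp_continuous h1 h2).norm).pow 2
    have hint : IntegrableOn (fun θ : ℝ => ‖f (circleMap 0 r θ)‖^2) (Ioo (-π) π) :=
      (hfc.integrableOn_Icc (a := -π) (b := π)).mono_set Ioo_subset_Icc_self
    have hlin : ∫⁻ θ in Ioo (-π) π, ENNReal.ofReal (‖f (circleMap 0 r θ)‖^2)
        = ENNReal.ofReal (∫ θ in Ioo (-π) π, ‖f (circleMap 0 r θ)‖^2) :=
      (ofReal_integral_eq_lintegral_ofReal hint (ae_of_all _ fun θ => by positivity)).symm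
    have hreal : 2*π*‖f 0‖^2 ≤ ∫ θ in Ioo (-π) π, ‖f (circleMap 0 r θ)‖^2 := by
      have hper : Function.Periodic (fun θ : ℝ => ‖f (circleMap 0 r θ)‖^2) (2*π) :=
        fun θ => congrArg (fun z => ‖f z‖^2) ((periodic_circleMap 0 r) θ)
      have hshift := hper.intervalIntegral_add_eq (-π) 0
      rw [← integral_Ioc_eq_integral_Ioo, ← intervalIntegral.integral_of_le
        (by linarith [Real.pi_pos] : (-π:ℝ) ≤ π)]
      have hpi : -π + 2*π = π := by ring
      rw [hpi] at hshift
      rw [hshift, zero_add]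
      exact circle_mean_sq f hf hr.1 hr.2
    calc ENNReal.ofReal r * ENNReal.ofReal (2*π*‖f 0‖^2)
        ≤ ENNReal.ofReal r * ENNReal.ofReal (∫ θ in Ioo (-π) π, ‖f (circleMap 0 r θ)‖^2) := by
          exact mul_le_mul_right (ENNReal.ofReal_le_ofReal hreal) _
      _ = ENNReal.ofReal |r| * ∫⁻ θ in Ioo (-π) π,
            ENNReal.ofReal (‖f (circleMap 0 r θ)‖^2) := by
          rw [hlin, abs_of_pos hr.1]
      _ = ∫⁻ θ in Ioo (-π) π, g (r, θ) := by
          rw [hgdef]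
          exact (lintegral_const_mul' _ _ ENNReal.ofReal_ne_top).symm
  -- outer computation
  have houter : (∫⁻ r in Ioo (0:ℝ) 1, ENNReal.ofReal r) = ENNReal.ofReal (1/2) := by
    rw [← ofReal_integral_eq_lintegral_ofReal]
    · congr 1
      rw [← integral_Ioc_eq_integral_Ioo, ← intervalIntegral.integral_of_le (by norm_num : (0:ℝ) ≤ 1)]
      simp [integral_id]
    · exact (continuous_id.integrableOn_Icc (a := (0:ℝ)) (b := 1)).mono_set Ioo_subset_Icc_self
    · exact (ae_restrict_iff' measurableSet_Ioo).2 (ae_of_all _ fun x hx => hx.1.le)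
  calc ENNReal.ofReal (π * ‖f 0‖^2)
      = (∫⁻ r in Ioo (0:ℝ) 1, ENNReal.ofReal r) * ENNReal.ofReal (2*π*‖f 0‖^2) := by
        rw [houter, ← ENNReal.ofReal_mul (by norm_num)]
        congr 1
        ring
    _ = ∫⁻ r in Ioo (0:ℝ) 1, ENNReal.ofReal r * ENNReal.ofReal (2*π*‖f 0‖^2) := by
        exact (lintegral_mul_const' _ _ ENNReal.ofReal_ne_top).symm
    _ ≤ ∫⁻ r in Ioo (0:ℝ) 1, ∫⁻ θ in Ioo (-π) π, g (r, θ) :=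
        setLIntegral_mono' measurableSet_Ioo inner
    _ = ∫⁻ p in s, g p := Fub.symm
    _ = ∫⁻ p in s, ENNReal.ofReal |(B p).det| * g0 (_root_.polarCoord.symm p) := by
        refine setLIntegral_congr_fun hs (fun p hp => ?_)
        rw [B_det, hgdef, hg0def]
        simp only []
        rw [circleMap_eq p.1 p.2]
    _ = ∫⁻ q in _root_.polarCoord.symm '' s, g0 q :=
        (lintegral_image_eq_lintegral_abs_det_fderiv_mul volume hs hder hinj g0).symm
    _ ≤ ∫⁻ q in E.symm ⁻¹' (ball (0:ℂ) 1), g0 q := by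
        refine lintegral_mono_set ?_
        rintro q ⟨p, hp, rfl⟩
        simp only [mem_preimage, mem_ball, dist_zero_right]
        rw [circleMap_eq p.1 p.2]
        simp only [norm_circleMap_zero]
        rw [abs_of_pos hp.1.1]
        exact hp.1.2
    _ = ∫⁻ z in ball (0:ℂ) 1, ENNReal.ofReal (‖f z‖^2) := hE

lemma det_restrict (c : ℂ) :
    (ContinuousLinearMap.restrictScalars ℝ ((1 : ℂ →L[ℂ] ℂ).smulRight c)).det
      = Complex.normSq c := by
  have : (ContinuousLinearMap.restrictScalars ℝ ((1 : ℂ →L[ℂ] ℂ).smulRight c)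
      : ℂ →ₗ[ℝ] ℂ).det = Complex.normSq c := by
    rw [← LinearMap.det_toMatrix Complex.basisOneI]
    rw [Matrix.det_fin_two]
    simp [LinearMap.toMatrix_apply, Complex.normSq_apply]
  exact this

lemma pointwise_bound (F : ℂ → ℂ) (hF : DifferentiableOn ℂ F {z : ℂ | 0 < z.im})
    {z₀ : ℂ} (hz : 0 < z₀.im) :
    ENNReal.ofReal (4 * π * z₀.im^2 * ‖F z₀‖^2)
      ≤ ∫⁻ z in {z : ℂ | 0 < z.im}, ENNReal.ofReal (‖F z‖^2) := by
  set y : ℝ := z₀.im with hydef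
  set φ : ℂ → ℂ := fun w => (z₀.re : ℂ) + ((y : ℂ) * Complex.I * (1 + w)) / (1 - w) with hφdef
  set φd : ℂ → ℂ := fun w => 2 * (y : ℂ) * Complex.I / (1 - w)^2 with hφddef
  have hne : ∀ w : ℂ, w ∈ ball (0:ℂ) 1 → (1 : ℂ) - w ≠ 0 := by
    intro w hw h
    have : w = 1 := by linear_combination -h
    rw [this] at hw
    simp at hw
  have hder : ∀ w ∈ ball (0:ℂ) 1, HasDerivAt φ (φd w) w := by
    intro w hw
    have h1w := hne w hw
    have h1 : HasDerivAt (fun w : ℂ => (y : ℂ) * Complex.I * (1 + w)) ((y:ℂ) * Complex.I) w := by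
      simpa using ((hasDerivAt_id w).const_add (1:ℂ)).const_mul ((y:ℂ) * Complex.I)
    have h2 : HasDerivAt (fun w : ℂ => (1 : ℂ) - w) (-1) w := by
      simpa using (hasDerivAt_id w).const_sub (1:ℂ)
    have h3 := (h1.div h2 h1w).const_add (z₀.re : ℂ)
    refine h3.congr_deriv ?_
    rw [hφddef]
    field_simp
    ring
  have hmaps : ∀ w ∈ ball (0:ℂ) 1, φ w ∈ {z : ℂ | 0 < z.im} := by
    intro w hw
    have h1w := hne w hw
    have hnball : Complex.normSq w < 1 := by
      rw [mem_ball, dist_zero_right, ← Complex.sq_norm] at *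
      nlinarith [norm_nonneg w, hw]
    simp only [mem_setOf_eq, hφdef, Complex.add_im, Complex.ofReal_im, zero_add]
    rw [Complex.div_im]
    have hsq : 0 < Complex.normSq (1 - w) := Complex.normSq_pos.2 h1w
    have hnum : ((y:ℂ) * Complex.I * (1 + w)).im * (1 - w).re
        - ((y:ℂ) * Complex.I * (1 + w)).re * (1 - w).im = y * (1 - Complex.normSq w) := by
      simp [Complex.mul_im, Complex.mul_re, Complex.normSq_apply]
      ring
    have : 0 < y * (1 - Complex.normSq w) := by
      apply mul_pos hz
      linarith
    rw [div_sub_div_same] at *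
    rw [hnum] at *
    positivity
  have hinj : InjOn φ (ball (0:ℂ) 1) := by
    intro w1 h1 w2 h2 heq
    have h1w := hne w1 h1
    have h2w := hne w2 h2
    rw [hφdef] at heq
    simp only at heq
    have hy : (y : ℂ) ≠ 0 := by
      simp only [ne_eq, Complex.ofReal_eq_zero]
      exact hz.ne'
    field_simp at heq
    have h2y : 2 * (y:ℂ) * Complex.I ≠ 0 := by
      simp [hy, Complex.I_ne_zero]
    apply mul_left_cancel₀ h2y
    linear_combination heq
  have hf0 : φ 0 = z₀ := by
    simp only [hφdef, add_zero, sub_zero, div_one, mul_one]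
    rw [hydef]
    exact Complex.re_add_im z₀
  -- the transplanted function
  set f : ℂ → ℂ := fun w => φd w * F (φ w) with hfdef
  have hfd : DifferentiableOn ℂ f (ball (0:ℂ) 1) := by
    apply DifferentiableOn.mul
    · intro w hw
      apply DifferentiableAt.differentiableWithinAt
      apply DifferentiableAt.div
      · fun_prop
      · fun_prop
      · exact pow_ne_zero 2 (hne w hw)
    · exact hF.comp (fun w hw => ((hder w hw).differentiableAt).differentiableWithinAt) hmaps
  have harea := area_bound f hfd
  have hf0norm : ‖f 0‖^2 = 4 * y^2 * ‖F z₀‖^2 := by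
    rw [hfdef]
    simp only [hf0]
    rw [norm_mul, mul_pow]
    congr 1
    rw [hφddef]
    have h01 : ((1:ℂ) - 0)^2 = 1 := by norm_num
    simp only [h01, div_one]
    rw [norm_mul, norm_mul]
    simp [Complex.norm_real, abs_of_pos hz]
    ring
  -- change of variables on the ball
  set CLM : ℂ → (ℂ →L[ℝ] ℂ) := fun w =>
    ContinuousLinearMap.restrictScalars ℝ ((1 : ℂ →L[ℂ] ℂ).smulRight (φd w)) with hCLM
  have hder' : ∀ w ∈ ball (0:ℂ) 1, HasFDerivWithinAt φ (CLM w) (ball (0:ℂ) 1) w := by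
    intro w hw
    exact ((hder w hw).hasFDerivAt.restrictScalars ℝ).hasFDerivWithinAt
  have hcov := lintegral_image_eq_lintegral_abs_det_fderiv_mul volume measurableSet_ball
    hder' hinj (fun z => ENNReal.ofReal (‖F z‖^2))
  have heq2 : ∫⁻ w in ball (0:ℂ) 1, ENNReal.ofReal (‖f w‖^2)
      = ∫⁻ z in φ '' ball (0:ℂ) 1, ENNReal.ofReal (‖F z‖^2) := by
    rw [hcov]
    refine setLIntegral_congr_fun measurableSet_ball (fun w hw => ?_)
    rw [hCLM]
    simp only []
    rw [det_restrict, ← ENNReal.ofReal_mul (by positivity)]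
    congr 1
    rw [abs_of_nonneg (Complex.normSq_nonneg _), hfdef]
    simp only [norm_mul, mul_pow, Complex.normSq_eq_norm_sq]
  calc ENNReal.ofReal (4 * π * y^2 * ‖F z₀‖^2)
      = ENNReal.ofReal (π * ‖f 0‖^2) := by rw [hf0norm]; ring_nf
    _ ≤ ∫⁻ w in ball (0:ℂ) 1, ENNReal.ofReal (‖f w‖^2) := harea
    _ = ∫⁻ z in φ '' ball (0:ℂ) 1, ENNReal.ofReal (‖F z‖^2) := heq2
    _ ≤ ∫⁻ z in {z : ℂ | 0 < z.im}, ENNReal.ofReal (‖F z‖^2) := by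
        apply lintegral_mono_set
        rintro z ⟨w, hw, rfl⟩
        exact hmaps w hw

theorem lieb_solovej_preliminary_bound (s : ℝ) (hs : 1 ≤ s) (F : ℂ → ℂ)
    (hF : DifferentiableOn ℂ F {z : ℂ | 0 < z.im})
    (hInt : IntegrableOn
      (fun p : ℝ × ℝ => ‖F (p.1 + p.2 * Complex.I)‖ ^ 2)
      {p : ℝ × ℝ | 0 < p.2}) :
    ∫ p in {p : ℝ × ℝ | 0 < p.2},
        ‖F (p.1 + p.2 * Complex.I)‖ ^ (2 * s) * p.2 ^ (2 * s - 2)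
      ≤ (π ^ (1 - s) / 2 ^ (2 * s - 2)) *
        (∫ p in {p : ℝ × ℝ | 0 < p.2},
          ‖F (p.1 + p.2 * Complex.I)‖ ^ 2) ^ s := by
  set S : Set (ℝ × ℝ) := {p : ℝ × ℝ | 0 < p.2} with hSdef
  have hSmeas : MeasurableSet S := measurableSet_lt measurable_const measurable_snd
  set A : ℝ × ℝ → ℝ := fun p => ‖F (p.1 + p.2 * Complex.I)‖ with hAdef
  set M : ℝ := ∫ p in S, A p ^ 2 with hMdef
  have hM0 : 0 ≤ M := by
    apply integral_nonneg
    intro p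
    positivity
  set E := Complex.measurableEquivRealProd with hEdef
  have hpre : E.symm ⁻¹' {z : ℂ | 0 < z.im} = S := by
    ext p
    simp [hEdef, Complex.measurableEquivRealProd_symm_apply, hSdef]
  have htrans : ∫⁻ z in {z : ℂ | 0 < z.im}, ENNReal.ofReal (‖F z‖^2)
      = ∫⁻ p in S, ENNReal.ofReal (A p ^ 2) := by
    rw [← (Complex.volume_preserving_equiv_real_prod.symm
        Complex.measurableEquivRealProd).setLIntegral_comp_preimage_emb
        E.symm.measurableEmbedding (fun z => ENNReal.ofReal (‖F z‖^2)) {z : ℂ | 0 < z.im}]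
    rw [hpre]
    refine lintegral_congr fun p => ?_
    congr 2
    rw [hAdef]
    congr 2
    rw [Complex.measurableEquivRealProd_symm_apply]
    exact (Complex.mk_eq_add_mul_I p.1 p.2)
  have hMeq : ∫⁻ p in S, ENNReal.ofReal (A p ^ 2) = ENNReal.ofReal M := by
    rw [hMdef]
    exact (ofReal_integral_eq_lintegral_ofReal hInt (ae_of_all _ fun p => by positivity)).symm
  have hpoint : ∀ p ∈ S, 4 * π * p.2^2 * A p ^ 2 ≤ M := by
    intro p hp
    have hz : (0:ℝ) < (↑p.1 + ↑p.2 * Complex.I).im := by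
      rw [show (↑p.1 + ↑p.2 * Complex.I : ℂ).im = p.2 by simp]; exact hp
    have hb := pointwise_bound F hF hz
    rw [htrans, hMeq] at hb
    have him : (↑p.1 + ↑p.2 * Complex.I).im = p.2 := by simp
    rw [him] at hb
    have := (ENNReal.ofReal_le_ofReal_iff hM0).1 hb
    rw [hAdef]
    simpa using this
  have h4pi : (0:ℝ) < 4 * π := by positivity
  set c : ℝ := (M / (4*π)) ^ (s-1) with hcdef
  have hc0 : 0 ≤ c := Real.rpow_nonneg (by positivity) _
  have hptwise : ∀ p ∈ S, A p ^ (2*s) * p.2 ^ (2*s-2) ≤ c * A p ^ 2 := by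
    intro p hp
    have hy : (0:ℝ) < p.2 := hp
    have hA0 : 0 ≤ A p := norm_nonneg _
    rcases eq_or_lt_of_le hA0 with h0 | hApos
    · rw [← h0, Real.zero_rpow (by nlinarith : 2*s ≠ 0)]
      simp [← h0]
    · have hkey : A p ^ 2 * p.2 ^ 2 ≤ M / (4*π) := by
        rw [le_div_iff₀ h4pi]
        nlinarith [hpoint p hp]
      have hstep : (A p ^ 2 * p.2 ^ 2) ^ (s-1) ≤ c := by
        rw [hcdef]
        exact Real.rpow_le_rpow (by positivity) hkey (by linarith)
      have e1 : (A p ^ 2 * p.2 ^ 2 : ℝ)^(s-1) = A p ^(2*(s-1)) * p.2 ^(2*(s-1)) := by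
        rw [Real.mul_rpow (by positivity) (by positivity),
          ← Real.rpow_natCast (A p) 2, ← Real.rpow_natCast p.2 2,
          ← Real.rpow_mul hA0, ← Real.rpow_mul hy.le]
        norm_num
      have e2 : A p ^(2*s) = A p ^2 * A p ^(2*(s-1)) := by
        rw [show (2*s:ℝ) = 2 + 2*(s-1) by ring, Real.rpow_add hApos,
          ← Real.rpow_natCast (A p) 2]
        norm_num
      have e3 : p.2 ^(2*s-2) = p.2 ^(2*(s-1)) := by
        congr 1
        ring
      calc A p ^ (2*s) * p.2 ^ (2*s-2)
          = A p ^2 * (A p ^ 2 * p.2 ^ 2 : ℝ)^(s-1) := by rw [e1, e2, e3]; ring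
        _ ≤ A p ^2 * c := mul_le_mul_of_nonneg_left hstep (by positivity)
        _ = c * A p ^2 := mul_comm _ _
  have hae1 : 0 ≤ᵐ[volume.restrict S] fun p : ℝ × ℝ => A p ^ (2*s) * p.2 ^ (2*s-2) :=
    (ae_restrict_iff' hSmeas).2 (ae_of_all _ fun p hp =>
      mul_nonneg (Real.rpow_nonneg (norm_nonneg _) _)
        (Real.rpow_nonneg (le_of_lt hp) _))
  have hae2 : (fun p : ℝ × ℝ => A p ^ (2*s) * p.2 ^ (2*s-2))
      ≤ᵐ[volume.restrict S] fun p => c * A p ^ 2 :=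
    (ae_restrict_iff' hSmeas).2 (ae_of_all _ hptwise)
  have hint2 : Integrable (fun p : ℝ × ℝ => c * A p ^ 2) (volume.restrict S) :=
    hInt.const_mul c
  have hineq : ∫ p in S, A p ^ (2*s) * p.2 ^ (2*s-2) ≤ c * M := by
    refine le_trans (integral_mono_of_nonneg hae1 hint2 hae2) ?_
    rw [integral_const_mul]
  have hfinal : c * M = π ^ (1-s) / 2 ^ (2*s-2) * M ^ s := by
    rcases hM0.eq_or_lt with h0 | hMpos
    · rw [← h0, Real.zero_rpow (by linarith : s ≠ 0)]
      simp
    · have h2pow : (2:ℝ)^(2*s-2) = 4^(s-1) := by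
        rw [show (2*s-2:ℝ) = 2*(s-1) by ring, Real.rpow_mul (by norm_num : (0:ℝ) ≤ 2)]
        norm_num
      have hMs : M^(s-1) * M = M^s := by
        nth_rewrite 2 [← Real.rpow_one M]
        rw [← Real.rpow_add hMpos]
        norm_num
      rw [hcdef, Real.div_rpow hM0 h4pi.le, h2pow]
      rw [show ((4:ℝ)*π)^(s-1) = 4^(s-1)*π^(s-1) from Real.mul_rpow (by norm_num) Real.pi_pos.le]
      rw [show (1-s:ℝ) = -(s-1) by ring, Real.rpow_neg Real.pi_pos.le]
      have h4pos : (0:ℝ) < (4:ℝ)^(s-1) := Real.rpow_pos_of_pos (by norm_num) _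
      have hppos : (0:ℝ) < π^(s-1) := Real.rpow_pos_of_pos Real.pi_pos _
      field_simp
      rw [← hMs]
  calc ∫ p in S, A p ^ (2*s) * p.2 ^ (2*s-2) ≤ c * M := hineq
    _ = π ^ (1-s) / 2 ^ (2*s-2) * M ^ s := hfinal
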